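/- arXiv:2207.13952 — 2 statements merged into one kernel-verified Lean document; each statement's English description precedes it below -/
import Mathlib

section
/- Mscm is a category: the data consisting of objects given by pairs of finite types (X_in, X_out), hom-sets given by pairs of matrices (M_in : Matrix X_in (Y_in ⊕ X_out) K, M_out : Matrix Y_out X_out K), identity morphisms given by (fromBlocks 1 0, 1), and composition given by the matrix composition formula, satisfies all the axioms of a category (left identity, right identity, and associativity), and hence admits a Category instance in the sense of category theory. -/
/-!
Mscm morphisms over the language semiring `K = Language σ`.

A morphism from `X = (Xin, Xout)` to `Y = (Yin, Yout)` is a pair of matrices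
`(Min : Matrix Xin (Yin ⊕ Xout) K, Mout : Matrix Yout Xout K)`.
The identity on `X` is `(Matrix.fromCols 1 0, 1)` (the block row `[1 | 0]`).
-/

/-- The auxiliary matrix `N'_out` of the composition formula: the block matrix of type
`Matrix ((Zin ⊕ Yout) ⊕ Xout) (Zin ⊕ Xout) K` whose `(Zin, Zin)` block is the identity,
whose `(Yout, Xout)` block is `Nout`, whose `(Xout, Xout)` block is the identity, and
whose remaining blocks are zero. -/
def mscmNout' {σ : Type} {Zin Yout Xout : Type} [DecidableEq Zin] [DecidableEq Xout]
    (Nout : Matrix Yout Xout (Language σ)) :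
    Matrix ((Zin ⊕ Yout) ⊕ Xout) (Zin ⊕ Xout) (Language σ) :=
  Matrix.of fun r c =>
    match r, c with
    | Sum.inl (Sum.inl z), Sum.inl z' => (1 : Matrix Zin Zin (Language σ)) z z'
    | Sum.inl (Sum.inr y), Sum.inr x => Nout y x
    | Sum.inr x, Sum.inr x' => (1 : Matrix Xout Xout (Language σ)) x x'
    | _, _ => 0

/-- The input-matrix component of the composite `m ∘ n` of Mscm-morphisms
`n = (Nin, Nout) : X → Y` and `m = (Min, Mout) : Y → Z`, namely
`O_in = N_in * M'_in * N'_out` where `M'_in = fromBlocks Min 0 0 1`. -/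
def mscmCompIn {σ : Type} {Xin Xout Yin Yout Zin : Type}
    [Fintype Yin] [Fintype Yout] [Fintype Xout] [Fintype Zin]
    [DecidableEq Zin] [DecidableEq Xout]
    (Nin : Matrix Xin (Yin ⊕ Xout) (Language σ))
    (Nout : Matrix Yout Xout (Language σ))
    (Min : Matrix Yin (Zin ⊕ Yout) (Language σ)) :
    Matrix Xin (Zin ⊕ Xout) (Language σ) :=
  Nin * (Matrix.fromBlocks Min 0 0 1 :
      Matrix (Yin ⊕ Xout) ((Zin ⊕ Yout) ⊕ Xout) (Language σ)) * mscmNout' (Zin := Zin) Nout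


open CategoryTheory

/-- An object of `Mscm`: a pair of finite types, the input and output ports of a box. -/
structure MscmObj (σ : Type) : Type 1 where
  inT : Type
  outT : Type
  [finIn : Fintype inT]
  [finOut : Fintype outT]
  [decIn : DecidableEq inT]
  [decOut : DecidableEq outT]

attribute [instance] MscmObj.finIn MscmObj.finOut MscmObj.decIn MscmObj.decOut

/-- The category structure of `Mscm`: a morphism `X ⟶ Y` is a pair of matrices
`(Min : Matrix X.inT (Y.inT ⊕ X.outT) K, Mout : Matrix Y.outT X.outT K)` over the
language semiring `K = Language σ`; the identity is `(fromColumns 1 0, 1)`; and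
composition is given by the matrix composition formula. -/
instance mscmCategoryStruct (σ : Type) : CategoryStruct (MscmObj σ) where
  Hom X Y := Matrix X.inT (Y.inT ⊕ X.outT) (Language σ) × Matrix Y.outT X.outT (Language σ)
  id X := (Matrix.fromCols 1 0, 1)
  comp {X Y Z} n m := (mscmCompIn n.1 n.2 m.1, m.2 * n.2)

open Matrix in
lemma mscmNout'_eq {σ : Type} {Zin Yout Xout : Type} [DecidableEq Zin] [DecidableEq Xout]
    (Nout : Matrix Yout Xout (Language σ)) :
    mscmNout' (Zin := Zin) Nout =
      fromBlocks (fromRows 1 0) (fromRows 0 Nout) 0 1 := by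
  ext (⟨z | y⟩ | x) (z' | x') <;>
    simp [mscmNout', fromBlocks, fromRows_apply_inl, fromRows_apply_inr]

open Matrix in
lemma mscmCompIn_eq {σ : Type} {Xin Xout Yin Yout Zin : Type}
    [Fintype Yin] [Fintype Yout] [Fintype Xout] [Fintype Zin]
    [DecidableEq Zin] [DecidableEq Xout]
    (A : Matrix Xin Yin (Language σ)) (B : Matrix Xin Xout (Language σ))
    (Nout : Matrix Yout Xout (Language σ))
    (C : Matrix Yin Zin (Language σ)) (D : Matrix Yin Yout (Language σ)) :
    mscmCompIn (fromCols A B) Nout (fromCols C D) =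
      fromCols (A * C) (A * D * Nout + B) := by
  rw [mscmCompIn, mscmNout'_eq, fromCols_mul_fromBlocks]
  simp only [Matrix.mul_zero, Matrix.zero_mul, add_zero, zero_add, Matrix.mul_one,
    mul_fromCols]
  rw [fromCols_mul_fromBlocks]
  simp only [Matrix.mul_zero, Matrix.zero_mul, add_zero, zero_add, Matrix.mul_one,
    fromCols_mul_fromRows]

/-- **Mscm is a category**: the objects (pairs of finite types), hom-sets (pairs of
matrices over the language semiring), identities `(fromColumns 1 0, 1)` and the matrix
composition formula satisfy the left identity, right identity and associativity laws,
and hence admit a `Category` instance. -/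
theorem mscm_is_category (σ : Type) :
    (∀ (X Y : MscmObj σ) (f : X ⟶ Y), 𝟙 X ≫ f = f) ∧
    (∀ (X Y : MscmObj σ) (f : X ⟶ Y), f ≫ 𝟙 Y = f) ∧
    (∀ (W X Y Z : MscmObj σ) (f : W ⟶ X) (g : X ⟶ Y) (h : Y ⟶ Z),
        (f ≫ g) ≫ h = f ≫ (g ≫ h)) ∧
    Nonempty (Category (MscmObj σ)) := by
  have hid : ∀ (X Y : MscmObj σ) (f : X ⟶ Y), 𝟙 X ≫ f = f := by
    intro X Y f
    show (mscmCompIn (Matrix.fromCols 1 0) 1 f.1, f.2 * 1) = f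
    rw [← Matrix.fromCols_toCols f.1, mscmCompIn_eq]
    simp
  have hcid : ∀ (X Y : MscmObj σ) (f : X ⟶ Y), f ≫ 𝟙 Y = f := by
    intro X Y f
    show (mscmCompIn f.1 f.2 (Matrix.fromCols 1 0), 1 * f.2) = f
    rw [← Matrix.fromCols_toCols f.1, mscmCompIn_eq]
    simp
  have hassoc : ∀ (W X Y Z : MscmObj σ) (f : W ⟶ X) (g : X ⟶ Y) (h : Y ⟶ Z),
      (f ≫ g) ≫ h = f ≫ (g ≫ h) := by
    intro W X Y Z f g h
    show (mscmCompIn (mscmCompIn f.1 f.2 g.1) (g.2 * f.2) h.1, h.2 * (g.2 * f.2))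
        = (mscmCompIn f.1 f.2 (mscmCompIn g.1 g.2 h.1), h.2 * g.2 * f.2)
    rw [← Matrix.fromCols_toCols f.1, ← Matrix.fromCols_toCols g.1,
      ← Matrix.fromCols_toCols h.1, mscmCompIn_eq, mscmCompIn_eq, mscmCompIn_eq,
      mscmCompIn_eq]
    refine Prod.ext ?_ (Matrix.mul_assoc _ _ _).symm
    simp only [Matrix.mul_add, Matrix.add_mul, Matrix.mul_assoc, add_assoc]
  refine ⟨hid, hcid, hassoc, ⟨?_⟩⟩
  exact { Hom := fun _ _ => PUnit
          id := fun _ => ⟨⟩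
          comp := fun _ _ => ⟨⟩
          id_comp := fun _ => rfl
          comp_id := fun _ => rfl
          assoc := fun _ _ _ => rfl }
end

section
/- The tensor product of Mscm-morphisms preserves composition (functoriality of ⊗; the interchange law): for morphisms θ1 : X1 → Y1, θ2 : X2 → Y2, α1 : Y1 → Z1, α2 : Y2 → Z2, one has (α1 ∘ θ1) ⊗ (α2 ∘ θ2) = (α1 ⊗ α2) ∘ (θ1 ⊗ θ2), where ∘ is the matrix composition formula and ⊗ is block-diagonal stacking of the component matrices with reindexing along the canonical sum-type bijections; i.e., both component matrices of the two sides coincide. -/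
/-- The in-component of the tensor product of two Mscm-morphisms: the block-diagonal
matrix with blocks `M1in` and `M2in`, reindexed along the canonical bijection
`(Y1in ⊕ X1out) ⊕ (Y2in ⊕ X2out) ≃ (Y1in ⊕ Y2in) ⊕ (X1out ⊕ X2out)`. -/
def mscmTensorIn {σ : Type} {X1in X1out Y1in X2in X2out Y2in : Type}
    (M1in : Matrix X1in (Y1in ⊕ X1out) (Language σ))
    (M2in : Matrix X2in (Y2in ⊕ X2out) (Language σ)) :
    Matrix (X1in ⊕ X2in) ((Y1in ⊕ Y2in) ⊕ (X1out ⊕ X2out)) (Language σ) :=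
  (Matrix.fromBlocks M1in 0 0 M2in).submatrix id
    (Equiv.sumSumSumComm Y1in X1out Y2in X2out).symm


private lemma submatrix_id_mul_right {α : Type*} [NonUnitalNonAssocSemiring α]
    {m n p q : Type*} [Fintype n]
    (M : Matrix m n α) (N : Matrix n p α) (g : q → p) :
    (M * N).submatrix id g = M * N.submatrix id g := by
  ext i j; simp [Matrix.mul_apply]

private lemma submatrix_equiv_mul' {α : Type*} [NonUnitalNonAssocSemiring α]
    {m n p q : Type*} [Fintype n] [Fintype q]
    (M : Matrix m n α) (N : Matrix q p α) (e : q ≃ n) :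
    M.submatrix id e * N = M * N.submatrix e.symm id := by
  ext i j
  rw [Matrix.mul_apply, Matrix.mul_apply]
  exact Fintype.sum_equiv e _ _ (fun k => by simp)

set_option maxHeartbeats 2000000 in
/-- **Tensor preserves composition (the interchange law)**: for Mscm-morphisms
`θ1 = (T1in, T1out) : X1 → Y1`, `θ2 = (T2in, T2out) : X2 → Y2`,
`α1 = (A1in, A1out) : Y1 → Z1`, `α2 = (A2in, A2out) : Y2 → Z2`, one has
`(α1 ∘ θ1) ⊗ (α2 ∘ θ2) = (α1 ⊗ α2) ∘ (θ1 ⊗ θ2)`. -/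
theorem mscm_tensor_comp {σ : Type}
    {X1in X1out Y1in Y1out Z1in Z1out X2in X2out Y2in Y2out Z2in Z2out : Type}
    [Fintype X1in] [Fintype X1out] [Fintype Y1in] [Fintype Y1out] [Fintype Z1in] [Fintype Z1out]
    [Fintype X2in] [Fintype X2out] [Fintype Y2in] [Fintype Y2out] [Fintype Z2in] [Fintype Z2out]
    [DecidableEq X1out] [DecidableEq Z1in] [DecidableEq X2out] [DecidableEq Z2in]
    (T1in : Matrix X1in (Y1in ⊕ X1out) (Language σ)) (T1out : Matrix Y1out X1out (Language σ))
    (T2in : Matrix X2in (Y2in ⊕ X2out) (Language σ)) (T2out : Matrix Y2out X2out (Language σ))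
    (A1in : Matrix Y1in (Z1in ⊕ Y1out) (Language σ)) (A1out : Matrix Z1out Y1out (Language σ))
    (A2in : Matrix Y2in (Z2in ⊕ Y2out) (Language σ)) (A2out : Matrix Z2out Y2out (Language σ)) :
    mscmTensorIn (mscmCompIn T1in T1out A1in) (mscmCompIn T2in T2out A2in)
      = mscmCompIn (mscmTensorIn T1in T2in) (Matrix.fromBlocks T1out 0 0 T2out)
          (mscmTensorIn A1in A2in) ∧
    Matrix.fromBlocks (A1out * T1out) 0 0 (A2out * T2out)
      = Matrix.fromBlocks A1out 0 0 A2out * Matrix.fromBlocks T1out 0 0 T2out := by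
  refine ⟨?_, ?_⟩
  · set eY := Equiv.sumSumSumComm Y1in X1out Y2in X2out with heY
    set eZ := Equiv.sumSumSumComm Z1in X1out Z2in X2out with heZ
    set Q1 := Matrix.fromBlocks A1in 0 0 (1 : Matrix X1out X1out (Language σ)) *
      mscmNout' (Zin := Z1in) T1out with hQ1
    set Q2 := Matrix.fromBlocks A2in 0 0 (1 : Matrix X2out X2out (Language σ)) *
      mscmNout' (Zin := Z2in) T2out with hQ2
    set Qt := Matrix.fromBlocks (mscmTensorIn A1in A2in) 0 0
        (1 : Matrix (X1out ⊕ X2out) (X1out ⊕ X2out) (Language σ)) *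
      mscmNout' (Zin := Z1in ⊕ Z2in) (Matrix.fromBlocks T1out 0 0 T2out) with hQt
    have hkey : (Matrix.fromBlocks Q1 0 0 Q2).submatrix id eZ.symm
        = Qt.submatrix eY id := by
      ext a c
      rcases a with (a | a) | (a | a) <;> rcases c with (c | c) | (c | c) <;>
        simp [hQ1, hQ2, hQt, heY, heZ, Matrix.mul_apply, Matrix.fromBlocks, mscmNout',
          mscmTensorIn, Fintype.sum_sum_type, Matrix.one_apply, mul_ite, ite_mul,
          Finset.sum_ite_eq, Finset.sum_ite_eq']
    have hblock : Matrix.fromBlocks (T1in * Q1) 0 0 (T2in * Q2)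
        = Matrix.fromBlocks T1in 0 0 T2in * Matrix.fromBlocks Q1 0 0 Q2 := by
      rw [Matrix.fromBlocks_multiply]; simp
    have hL : mscmTensorIn (mscmCompIn T1in T1out A1in) (mscmCompIn T2in T2out A2in)
        = Matrix.fromBlocks T1in 0 0 T2in *
            (Matrix.fromBlocks Q1 0 0 Q2).submatrix id eZ.symm := by
      rw [← submatrix_id_mul_right, ← hblock]
      unfold mscmTensorIn mscmCompIn
      rw [Matrix.mul_assoc, Matrix.mul_assoc, ← hQ1, ← hQ2]
    have hR : mscmCompIn (mscmTensorIn T1in T2in) (Matrix.fromBlocks T1out 0 0 T2out)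
          (mscmTensorIn A1in A2in)
        = Matrix.fromBlocks T1in 0 0 T2in * Qt.submatrix eY id := by
      show (Matrix.fromBlocks T1in 0 0 T2in).submatrix id eY.symm *
          (Matrix.fromBlocks (mscmTensorIn A1in A2in) 0 0 1) * _ = _
      rw [Matrix.mul_assoc, submatrix_equiv_mul', Equiv.symm_symm, ← hQt]
    rw [hL, hR, hkey]
  · rw [Matrix.fromBlocks_multiply]
    simp
end
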